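/- Let f(X) be a polynomial with non-negative integer coefficients of degree n ≥ 2. If f(m) is a prime number for some integer m > 1/sin(π/n), then f is irreducible over ℚ. -/

import Mathlib

/-- The open sector with vertex `v` on the real axis and half-angle `θ`:
complex numbers `z ≠ v` with `|arg (z - v)| < θ`. -/
def sector (v θ : ℝ) : Set ℂ :=
  {z : ℂ | z ≠ (v : ℂ) ∧ |Complex.arg (z - (v : ℂ))| < θ}

/-- The open upper half-sector: `z = v + ρ e^{iφ}` with `ρ > 0`, `0 < φ < θ`. -/
def sectorPlus (v θ : ℝ) : Set ℂ :=
  {z : ℂ | 0 < Complex.arg (z - (v : ℂ)) ∧ Complex.arg (z - (v : ℂ)) < θ}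

/-- The open lower half-sector: `z = v + ρ e^{iφ}` with `ρ > 0`, `-θ < φ < 0`. -/
def sectorMinus (v θ : ℝ) : Set ℂ :=
  {z : ℂ | -θ < Complex.arg (z - (v : ℂ)) ∧ Complex.arg (z - (v : ℂ)) < 0}

open Polynomial Finset in
private lemma evalB' (n : ℕ) (f : Polynomial ℤ) (hdeg : f.natDegree = n) (z : ℂ) :
    ((f.map (Int.castRingHom ℂ)).eval z).im
      = ∑ k ∈ range (n+1), (f.coeff k : ℝ) * (‖z‖)^k * Real.sin (k * Complex.arg z) := by
  have hF : (f.map (Int.castRingHom ℂ)).natDegree = n := by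
    rw [Polynomial.natDegree_map_eq_of_injective Int.cast_injective f, hdeg]
  rw [Polynomial.eval_eq_sum_range' (lt_of_le_of_lt hF.le (Nat.lt_succ_self n))]
  rw [Complex.im_sum]
  apply Finset.sum_congr rfl
  intro k hk
  rw [Polynomial.coeff_map]
  conv_lhs => rw [← Complex.norm_mul_exp_arg_mul_I z]
  rw [mul_pow, ← Complex.ofReal_pow, ← Complex.exp_nat_mul]
  have h1 : (k : ℂ) * (↑(Complex.arg z) * Complex.I) = ↑((k : ℝ) * Complex.arg z) * Complex.I := by
    push_cast; ring
  rw [h1]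
  simp [Int.coe_castRingHom, ← Complex.ofReal_intCast, ← Complex.ofReal_pow, ← Complex.ofReal_mul,
    Complex.mul_im, Complex.exp_ofReal_mul_I_im, Complex.exp_ofReal_mul_I_re]
  ring

open Polynomial Finset in
private lemma evalBre' (n : ℕ) (f : Polynomial ℤ) (hdeg : f.natDegree = n) (z : ℂ) :
    ((f.map (Int.castRingHom ℂ)).eval z).re
      = ∑ k ∈ range (n+1), (f.coeff k : ℝ) * (‖z‖)^k * Real.cos (k * Complex.arg z) := by
  have hF : (f.map (Int.castRingHom ℂ)).natDegree = n := by
    rw [Polynomial.natDegree_map_eq_of_injective Int.cast_injective f, hdeg]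
  rw [Polynomial.eval_eq_sum_range' (lt_of_le_of_lt hF.le (Nat.lt_succ_self n))]
  rw [Complex.re_sum]
  apply Finset.sum_congr rfl
  intro k hk
  rw [Polynomial.coeff_map]
  conv_lhs => rw [← Complex.norm_mul_exp_arg_mul_I z]
  rw [mul_pow, ← Complex.ofReal_pow, ← Complex.exp_nat_mul]
  have h1 : (k : ℂ) * (↑(Complex.arg z) * Complex.I) = ↑((k : ℝ) * Complex.arg z) * Complex.I := by
    push_cast; ring
  rw [h1]
  simp [Int.coe_castRingHom, ← Complex.ofReal_intCast, ← Complex.ofReal_pow, ← Complex.ofReal_mul,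
    Complex.mul_re, Complex.exp_ofReal_mul_I_im, Complex.exp_ofReal_mul_I_re]
  ring

open Polynomial Finset in
private lemma auxA' (n : ℕ) (hn : 2 ≤ n) (f : Polynomial ℤ) (hdeg : f.natDegree = n)
    (hcoeff : ∀ i, 0 ≤ f.coeff i) (r ψ : ℝ) (hr : 0 < r) (hψ : 0 < ψ)
    (hψn : (n : ℝ) * ψ < Real.pi) :
    0 < ∑ k ∈ range (n+1), (f.coeff k : ℝ) * r^k * Real.sin (k * ψ) := by
  have hf0 : f ≠ 0 := by
    intro h; rw [h] at hdeg; simp at hdeg; omega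
  have hlead : 0 < f.coeff n := by
    have := hcoeff n
    have hne : f.coeff n ≠ 0 := by
      rw [← hdeg]; exact Polynomial.leadingCoeff_ne_zero.mpr hf0
    omega
  apply Finset.sum_pos'
  · intro k hk
    simp only [Finset.mem_range] at hk
    have hk' : (k : ℝ) * ψ ≤ (n : ℝ) * ψ := by
      apply mul_le_mul_of_nonneg_right _ hψ.le
      exact_mod_cast Nat.lt_succ_iff.mp hk
    have : 0 ≤ Real.sin (k * ψ) :=
      Real.sin_nonneg_of_nonneg_of_le_pi (by positivity) (hk'.trans hψn.le)
    have h1 : (0:ℝ) ≤ (f.coeff k : ℝ) := by exact_mod_cast hcoeff k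
    positivity
  · refine ⟨n, Finset.self_mem_range_succ n, ?_⟩
    have hn0 : (0:ℝ) < (n:ℝ) := by
      have : 0 < n := by omega
      exact_mod_cast this
    have hs : 0 < Real.sin (n * ψ) :=
      Real.sin_pos_of_pos_of_lt_pi (by positivity) hψn
    have h1 : (0:ℝ) < (f.coeff n : ℝ) := by exact_mod_cast hlead
    positivity
open Polynomial Finset in
private lemma rootBound (n : ℕ) (hn : 2 ≤ n) (f : Polynomial ℤ) (hdeg : f.natDegree = n)
    (hcoeff : ∀ i, 0 ≤ f.coeff i) (m : ℝ) (hm : 0 < m)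
    (z : ℂ) (hz : (f.map (Int.castRingHom ℂ)).eval z = 0) :
    m * Real.sin (Real.pi / n) ≤ ‖((m : ℂ) - z)‖ := by
  have hn0 : (0:ℝ) < (n:ℝ) := by positivity
  have hpin : 0 < Real.pi / n := by positivity
  have hpin2 : Real.pi / n ≤ Real.pi / 2 := by
    apply div_le_div_of_nonneg_left Real.pi_pos.le two_pos
    exact_mod_cast hn
  have hs0 : 0 < Real.sin (Real.pi / n) :=
    Real.sin_pos_of_pos_of_lt_pi hpin (lt_of_le_of_lt hpin2 (by linarith [Real.pi_pos]))
  have hs1 : Real.sin (Real.pi / n) ≤ 1 := Real.sin_le_one _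
  -- case on re z
  rcases le_or_gt z.re 0 with hre | hre
  · -- left half plane: abs(m - z) ≥ m - z.re ≥ m ≥ m * s
    have h1 : (↑m - z).re ≤ ‖(↑m - z)‖ := Complex.re_le_norm _
    have h2 : (↑m - z).re = m - z.re := by simp
    nlinarith
  · -- right half plane
    have hzne : z ≠ 0 := fun h => by simp [h] at hre
    have habs : 0 < ‖z‖ := norm_pos_iff.mpr hzne
    set φ := Complex.arg z with hφ
    have hφ2 : |φ| < Real.pi / 2 := Complex.abs_arg_lt_pi_div_two_iff.mpr (Or.inl hre)
    rcases lt_or_ge |φ| (Real.pi / n) with hcase | hcase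
    · -- no root in the sector: contradiction
      exfalso
      rcases lt_trichotomy φ 0 with hneg | h0 | hpos
      · -- φ < 0 : Im < 0
        have key := auxA' n hn f hdeg hcoeff (‖z‖) (-φ) habs (by linarith)
          (by
            have : |φ| = -φ := abs_of_neg hneg
            calc (n:ℝ) * (-φ) < (n:ℝ) * (Real.pi / n) := by
                  apply mul_lt_mul_of_pos_left _ hn0
                  rw [← this]; exact hcase
              _ = Real.pi := by field_simp)
        have hsum : (∑ k ∈ range (n+1), (f.coeff k : ℝ) * (‖z‖)^k * Real.sin (k * φ))
            = -∑ k ∈ range (n+1), (f.coeff k : ℝ) * (‖z‖)^k * Real.sin (k * (-φ)) := by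
          rw [← Finset.sum_neg_distrib]
          apply Finset.sum_congr rfl
          intro k _
          rw [show (k:ℝ) * -φ = -((k:ℝ) * φ) by ring, Real.sin_neg]
          ring
        have him : (∑ k ∈ range (n+1), (f.coeff k : ℝ) * (‖z‖)^k * Real.sin (k * φ)) = 0 := by
          rw [← evalB' n f hdeg z, hz, Complex.zero_im]
        rw [hsum] at him
        linarith
      · -- φ = 0 : real positive, Re > 0
        have key : 0 < ∑ k ∈ range (n+1), (f.coeff k : ℝ) * (‖z‖)^k * Real.cos (k * φ) := by
          have : ∀ k : ℕ, Real.cos (k * φ) = 1 := by intro k; rw [h0]; simp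
          simp only [this]
          apply Finset.sum_pos'
          · intro k _
            have h1 : (0:ℝ) ≤ (f.coeff k : ℝ) := by exact_mod_cast hcoeff k
            positivity
          · refine ⟨n, Finset.self_mem_range_succ n, ?_⟩
            have hf0 : f ≠ 0 := by
              intro h; rw [h] at hdeg; simp at hdeg; omega
            have hlead : 0 < f.coeff n := by
              have := hcoeff n
              have hne : f.coeff n ≠ 0 := by
                rw [← hdeg]; exact Polynomial.leadingCoeff_ne_zero.mpr hf0
              omega
            have h1 : (0:ℝ) < (f.coeff n : ℝ) := by exact_mod_cast hlead
            positivity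
        rw [← evalBre' n f hdeg z, hz] at key
        simp at key
      · -- φ > 0 : Im > 0
        have key := auxA' n hn f hdeg hcoeff (‖z‖) φ habs hpos
          (by
            have : |φ| = φ := abs_of_pos hpos
            calc (n:ℝ) * φ < (n:ℝ) * (Real.pi / n) := by
                  apply mul_lt_mul_of_pos_left _ hn0
                  rw [← this]; exact hcase
              _ = Real.pi := by field_simp)
        rw [← evalB' n f hdeg z, hz] at key
        simp at key
    · -- sector bound: geometric estimate
      have hsinφ : Real.sin (Real.pi / n) ≤ |Real.sin φ| := by
        have hmono := Real.strictMonoOn_sin.monotoneOn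
        have h1 : Real.sin (Real.pi / n) ≤ Real.sin |φ| := by
          apply hmono _ _ hcase
          · constructor <;> [linarith; linarith]
          · constructor <;> [linarith [abs_nonneg φ]; linarith]
        rcases le_or_gt 0 φ with h | h
        · rw [abs_of_nonneg h] at h1
          exact h1.trans (le_abs_self _)
        · rw [abs_of_neg h, Real.sin_neg] at h1
          rw [abs_of_neg (show Real.sin φ < 0 by linarith)]
          linarith
      have hre' : z.re = ‖z‖ * Real.cos φ := by
        rw [hφ, Complex.cos_arg hzne]; field_simp
      have him' : z.im = ‖z‖ * Real.sin φ := by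
        rw [hφ, Complex.sin_arg]; field_simp
      have hsq : (m * Real.sin (Real.pi / n))^2 ≤ (‖((m:ℂ) - z)‖)^2 := by
        rw [Complex.sq_norm, Complex.normSq_apply]
        simp only [Complex.sub_re, Complex.sub_im, Complex.ofReal_re, Complex.ofReal_im]
        rw [hre', him']
        have hpyth : Real.cos φ ^ 2 + Real.sin φ ^ 2 = 1 := Real.cos_sq_add_sin_sq φ
        have hs2 : Real.sin (Real.pi / n) ^ 2 ≤ Real.sin φ ^ 2 := by
          have := pow_le_pow_left₀ hs0.le hsinφ 2
          rwa [sq_abs] at this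
        have hkey : m^2 * Real.sin (Real.pi / n)^2 ≤ m^2 * Real.sin φ^2 := by nlinarith
        have hr2 : (‖z‖)^2 * (Real.cos φ^2 + Real.sin φ^2) = (‖z‖)^2 := by
          rw [hpyth]; ring
        have hm2 : m^2 * (Real.cos φ^2 + Real.sin φ^2) = m^2 := by rw [hpyth]; ring
        nlinarith [sq_nonneg (‖z‖ - m * Real.cos φ), hkey, hr2, hm2]
      have h1 : 0 ≤ m * Real.sin (Real.pi / n) := by positivity
      nlinarith [norm_nonneg ((m:ℂ) - z)]

open Polynomial Finset in
private lemma multProdBound (t : Multiset ℝ) (μ : ℝ) (hμ : 1 ≤ μ) (h : ∀ x ∈ t, μ ≤ x) :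
    μ ^ (Multiset.card t) ≤ t.prod := by
  induction t using Multiset.induction_on with
  | empty => simp
  | cons a t ih =>
    rw [Multiset.prod_cons, Multiset.card_cons, pow_succ, mul_comm]
    have ha : μ ≤ a := h a (Multiset.mem_cons_self a t)
    have ht : μ ^ (Multiset.card t) ≤ t.prod := ih fun x hx => h x (Multiset.mem_cons_of_mem hx)
    have hμ0 : (0:ℝ) < μ := lt_of_lt_of_le one_pos hμ
    exact mul_le_mul ha ht (by positivity) (by linarith)

open Polynomial Finset in
private lemma divisorBound (n : ℕ) (hn : 2 ≤ n) (f : Polynomial ℤ) (hdeg : f.natDegree = n)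
    (hcoeff : ∀ i, 0 ≤ f.coeff i) (m : ℤ) (hm : 1 / Real.sin (Real.pi / n) < (m : ℝ))
    (g : Polynomial ℤ) (hgf : g ∣ f) (hd : g.natDegree ≠ 0) :
    1 < (g.eval m).natAbs := by
  have hn0 : (0:ℝ) < (n:ℝ) := by positivity
  have hpin : 0 < Real.pi / n := by positivity
  have hpin2 : Real.pi / n ≤ Real.pi / 2 := by
    apply div_le_div_of_nonneg_left Real.pi_pos.le two_pos
    exact_mod_cast hn
  have hs0 : 0 < Real.sin (Real.pi / n) :=
    Real.sin_pos_of_pos_of_lt_pi hpin (lt_of_le_of_lt hpin2 (by linarith [Real.pi_pos]))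
  have hmpos : (0:ℝ) < (m:ℝ) := lt_trans (by positivity) hm
  set μ : ℝ := (m:ℝ) * Real.sin (Real.pi / n) with hμdef
  have hμ : 1 < μ := by
    rw [hμdef]
    calc (1:ℝ) = (1 / Real.sin (Real.pi / n)) * Real.sin (Real.pi / n) := by field_simp
      _ < (m:ℝ) * Real.sin (Real.pi / n) := by
          apply mul_lt_mul_of_pos_right hm hs0
  have hf0 : f ≠ 0 := fun h => by rw [h] at hdeg; simp at hdeg; omega
  have hg0 : g ≠ 0 := fun h => hf0 (zero_dvd_iff.mp (h ▸ hgf))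
  set G := g.map (Int.castRingHom ℂ) with hGdef
  have hG0 : G ≠ 0 := by
    intro h
    apply hg0
    have := Polynomial.map_injective (Int.castRingHom ℂ) Int.cast_injective
    exact this (by simpa using h)
  have hsplit : G.Splits := IsAlgClosed.splits G
  have hdegG : G.natDegree = g.natDegree :=
    Polynomial.natDegree_map_eq_of_injective Int.cast_injective g
  have hcard : Multiset.card G.roots = g.natDegree := by
    rw [← hdegG]
    exact (Polynomial.splits_iff_card_roots.mp hsplit)
  have heval : G.eval ((m:ℤ):ℂ) = ((g.eval m : ℤ) : ℂ) := by
    rw [hGdef, Polynomial.eval_map]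
    exact_mod_cast Polynomial.eval₂_at_apply (Int.castRingHom ℂ) m
  have hprod := hsplit.eval_eq_prod_roots ((m:ℤ):ℂ)
  -- take abs
  have habs : ‖(G.eval ((m:ℤ):ℂ))‖
      = ‖G.leadingCoeff‖ * ((G.roots.map fun a => ((m:ℤ):ℂ) - a).map (‖·‖)).prod := by
    rw [hprod, norm_mul]
    congr 1
    exact map_multiset_prod (normHom (α := ℂ)) _
  have hlead : 1 ≤ ‖G.leadingCoeff‖ := by
    have h1 : G.leadingCoeff = ((g.leadingCoeff : ℤ) : ℂ) := by
      rw [Polynomial.leadingCoeff, hdegG, hGdef, Polynomial.coeff_map]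
      rfl
    rw [h1, Complex.norm_intCast]
    have : g.leadingCoeff ≠ 0 := Polynomial.leadingCoeff_ne_zero.mpr hg0
    have := Int.one_le_abs (by omega : g.leadingCoeff ≠ 0)
    exact_mod_cast this
  have hroots : ∀ x ∈ (G.roots.map fun a => ((m:ℤ):ℂ) - a).map (‖·‖), μ ≤ x := by
    intro x hx
    rw [Multiset.map_map] at hx
    obtain ⟨a, ha, rfl⟩ := Multiset.mem_map.mp hx
    have haroot : G.eval a = 0 := (Polynomial.mem_roots hG0).mp ha
    have hFroot : (f.map (Int.castRingHom ℂ)).eval a = 0 := by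
      obtain ⟨q, hq⟩ := hgf
      rw [hq, Polynomial.map_mul, Polynomial.eval_mul, haroot, zero_mul]
    have := rootBound n hn f hdeg hcoeff (m:ℝ) hmpos a hFroot
    simpa [Function.comp] using this
  have hμ1 : μ ≤ ((G.roots.map fun a => ((m:ℤ):ℂ) - a).map (‖·‖)).prod := by
    have hcard2 : Multiset.card ((G.roots.map fun a => ((m:ℤ):ℂ) - a).map (‖·‖))
        = g.natDegree := by
      simp [hcard]
    calc μ = μ ^ 1 := (pow_one μ).symm
      _ ≤ μ ^ g.natDegree := pow_le_pow_right₀ hμ.le (by omega)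
      _ = μ ^ Multiset.card ((G.roots.map fun a => ((m:ℤ):ℂ) - a).map (‖·‖)) := by
          rw [hcard2]
      _ ≤ _ := multProdBound _ μ hμ.le hroots
  have hfinal : 1 < ‖(G.eval ((m:ℤ):ℂ))‖ := by
    rw [habs]
    calc (1:ℝ) < μ := hμ
      _ ≤ ((G.roots.map fun a => ((m:ℤ):ℂ) - a).map (‖·‖)).prod := hμ1
      _ ≤ _ := by
          nlinarith [hμ1, hlead, hμ]
  rw [heval, Complex.norm_intCast] at hfinal
  rw [← Int.cast_abs] at hfinal
  have h2 : (1:ℤ) < |g.eval m| := by exact_mod_cast hfinal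
  rw [Int.abs_eq_natAbs] at h2
  exact_mod_cast h2

theorem stmt_11 (n : ℕ) (hn : 2 ≤ n) (f : Polynomial ℤ) (hdeg : f.natDegree = n)
    (hcoeff : ∀ i, 0 ≤ f.coeff i)
    (m : ℤ) (hm : 1 / Real.sin (Real.pi / n) < (m : ℝ))
    (p : ℕ) (hp : p.Prime) (hfm : f.eval m = (p : ℤ)) :
    Irreducible (f.map (Int.castRingHom ℚ)) := by
  have hn0 : (0:ℝ) < (n:ℝ) := by
    have : 0 < n := by omega
    exact_mod_cast this
  have hpin : 0 < Real.pi / n := by positivity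
  have hpin2 : Real.pi / n ≤ Real.pi / 2 := by
    apply div_le_div_of_nonneg_left Real.pi_pos.le two_pos
    exact_mod_cast hn
  have hs0 : 0 < Real.sin (Real.pi / n) :=
    Real.sin_pos_of_pos_of_lt_pi hpin (lt_of_le_of_lt hpin2 (by linarith [Real.pi_pos]))
  have hs1 : Real.sin (Real.pi / n) ≤ 1 := Real.sin_le_one _
  have hm1 : (1:ℝ) < (m:ℝ) := by
    have : (1:ℝ) ≤ 1 / Real.sin (Real.pi / n) := by
      rw [le_div_iff₀ hs0]; linarith
    linarith
  have hm2 : (2:ℤ) ≤ m := by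
    have : (1:ℤ) < m := by exact_mod_cast hm1
    omega
  have hf0 : f ≠ 0 := fun h => by rw [h] at hdeg; simp at hdeg; omega
  have hcn : f.coeff n ≠ 0 := by
    rw [← hdeg]; exact Polynomial.leadingCoeff_ne_zero.mpr hf0
  have hevalsum : f.eval m = ∑ i ∈ Finset.range (n+1), f.coeff i * m^i :=
    Polynomial.eval_eq_sum_range' (lt_of_le_of_lt hdeg.le (Nat.lt_succ_self n)) m
  -- primitivity
  have hprim : f.IsPrimitive := by
    intro r hr
    have hrc : ∀ i, r ∣ f.coeff i := (Polynomial.C_dvd_iff_dvd_coeff r f).mp hr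
    have hrp : r ∣ (p:ℤ) := by
      rw [← hfm, hevalsum]
      exact Finset.dvd_sum fun i _ => Dvd.dvd.mul_right (hrc i) _
    have hnat : r.natAbs ∣ p := by
      have := Int.natAbs_dvd_natAbs.mpr hrp
      simpa using this
    rcases (Nat.Prime.eq_one_or_self_of_dvd hp _ hnat) with h1 | h1
    · exact Int.isUnit_iff_natAbs_eq.mpr h1
    · exfalso
      -- then p divides the leading coefficient, too big
      have hpc : (p:ℤ) ≤ f.coeff n := by
        have hdvd : r ∣ f.coeff n := hrc n
        have : r.natAbs ∣ (f.coeff n).natAbs := Int.natAbs_dvd_natAbs.mpr hdvd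
        rw [h1] at this
        have hpos : 0 < (f.coeff n).natAbs := Int.natAbs_pos.mpr hcn
        have := Nat.le_of_dvd hpos this
        have hcnn := hcoeff n
        omega
      have hterm : f.coeff n * m^n ≤ f.eval m := by
        rw [hevalsum]
        apply Finset.single_le_sum (f := fun i => f.coeff i * m^i)
          (fun i _ => mul_nonneg (hcoeff i) (pow_nonneg (by omega) i))
          (Finset.self_mem_range_succ n)
      have hmn : (4:ℤ) ≤ m^n := by
        calc (4:ℤ) = 2^2 := by norm_num
          _ ≤ 2^n := pow_le_pow_right₀ (by norm_num) hn
          _ ≤ m^n := pow_le_pow_left₀ (by norm_num) hm2 n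
      have hp2 : (2:ℤ) ≤ (p:ℤ) := by exact_mod_cast hp.two_le
      nlinarith [hfm, hterm, hpc, hmn, hp2]
  -- irreducibility over ℤ
  have keyUnit : ∀ q : Polynomial ℤ, q ∣ f → (q.eval m).natAbs = 1 → IsUnit q := by
    intro q hq h1
    have hdq : q.natDegree = 0 := by
      by_contra hnd
      have := divisorBound n hn f hdeg hcoeff m hm q hq hnd
      omega
    have hqC : q = Polynomial.C (q.coeff 0) := Polynomial.eq_C_of_natDegree_eq_zero hdq
    rw [hqC]
    apply Polynomial.isUnit_C.mpr
    apply Int.isUnit_iff_natAbs_eq.mpr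
    have : q.eval m = q.coeff 0 := by rw [hqC]; simp
    rwa [this] at h1
  have firr : Irreducible f := by
    constructor
    · intro h
      have := Polynomial.natDegree_eq_zero_of_isUnit h
      omega
    · intro a b hab
      have heval : (p:ℤ) = a.eval m * b.eval m := by
        rw [← hfm, hab, Polynomial.eval_mul]
      have hnat : p = (a.eval m).natAbs * (b.eval m).natAbs := by
        have := congrArg Int.natAbs heval
        simpa [Int.natAbs_mul] using this
      have hadvd : (a.eval m).natAbs ∣ p := ⟨(b.eval m).natAbs, hnat⟩
      rcases Nat.Prime.eq_one_or_self_of_dvd hp _ hadvd with h1 | h1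
      · exact Or.inl (keyUnit a (Dvd.intro b hab.symm) h1)
      · right
        apply keyUnit b (Dvd.intro_left a hab.symm)
        rw [h1] at hnat
        have : p * (b.eval m).natAbs = p * 1 := by rw [mul_one]; exact hnat.symm
        exact Nat.eq_of_mul_eq_mul_left hp.pos this
  exact (Polynomial.IsPrimitive.Int.irreducible_iff_irreducible_map_cast hprim).mp firr
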